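/- Suppose x = e β_j + f β_{j+1} with 1 ≤ e ≤ v_j - 1, 0 ≤ f ≤ v_{j+1} - 1, and (e,f) ≠ (v_j - 1, v_{j+1} - 1), where v_j are the integers satisfying β_{j-1} + β_{j+1} = v_j β_j. Then x is uniquely decomposable, i.e., x has exactly one representation as a sum of indecomposable elements of O_K^+. -/

import Mathlib

open Real Filter

noncomputable def omg (D : ℕ) : ℝ := if D % 4 = 1 then (1 + Real.sqrt D) / 2 else Real.sqrt D

noncomputable def omgc (D : ℕ) : ℝ := if D % 4 = 1 then (1 - Real.sqrt D) / 2 else -Real.sqrt D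

noncomputable def sigmaD (D : ℕ) : ℝ := omg D + (⌊-omgc D⌋ : ℤ)

noncomputable def gam (D : ℕ) : ℕ → ℝ
  | 0 => sigmaD D
  | n + 1 => 1 / (gam D n - ⌊gam D n⌋)

/-- partial quotients of the continued fraction of σ_D -/
noncomputable def uD (D : ℕ) (n : ℕ) : ℤ := ⌊gam D n⌋

noncomputable def emb1 (D : ℕ) (x : ℤ × ℤ) : ℝ := (x.1 : ℝ) + (x.2 : ℝ) * omg D

noncomputable def emb2 (D : ℕ) (x : ℤ × ℤ) : ℝ := (x.1 : ℝ) + (x.2 : ℝ) * omgc D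

def conjp (D : ℕ) (x : ℤ × ℤ) : ℤ × ℤ := if D % 4 = 1 then (x.1 + x.2, -x.2) else (x.1, -x.2)

def TotPos (D : ℕ) (x : ℤ × ℤ) : Prop := 0 < emb1 D x ∧ 0 < emb2 D x

def Indec (D : ℕ) (x : ℤ × ℤ) : Prop :=
  TotPos D x ∧ ¬ ∃ y z : ℤ × ℤ, TotPos D y ∧ TotPos D z ∧ x = y + z

noncomputable def Nm (D : ℕ) (x : ℤ × ℤ) : ℝ := emb1 D x * emb2 D x

noncomputable def disc (D : ℕ) : ℝ := if D % 4 = 1 then (D : ℝ) else 4 * (D : ℝ)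

def UniqDec (D : ℕ) (x : ℤ × ℤ) : Prop :=
  ∃! m : Multiset (ℤ × ℤ), (∀ y ∈ m, Indec D y) ∧ m.sum = x

/- ### Auxiliary lemmas -/

lemma emb1_add' (D : ℕ) (x y : ℤ × ℤ) : emb1 D (x + y) = emb1 D x + emb1 D y := by
  simp only [emb1, Prod.fst_add, Prod.snd_add]; push_cast; ring

lemma emb2_add' (D : ℕ) (x y : ℤ × ℤ) : emb2 D (x + y) = emb2 D x + emb2 D y := by
  simp only [emb2, Prod.fst_add, Prod.snd_add]; push_cast; ring

lemma emb1_zsmul' (D : ℕ) (n : ℤ) (x : ℤ × ℤ) : emb1 D (n • x) = (n : ℝ) * emb1 D x := by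
  simp only [emb1, Prod.smul_fst, Prod.smul_snd, smul_eq_mul]; push_cast; ring

lemma emb2_zsmul' (D : ℕ) (n : ℤ) (x : ℤ × ℤ) : emb2 D (n • x) = (n : ℝ) * emb2 D x := by
  simp only [emb2, Prod.smul_fst, Prod.smul_snd, smul_eq_mul]; push_cast; ring

lemma emb1_sub' (D : ℕ) (x y : ℤ × ℤ) : emb1 D (x - y) = emb1 D x - emb1 D y := by
  simp only [emb1, Prod.fst_sub, Prod.snd_sub]; push_cast; ring

lemma emb2_sub' (D : ℕ) (x y : ℤ × ℤ) : emb2 D (x - y) = emb2 D x - emb2 D y := by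
  simp only [emb2, Prod.fst_sub, Prod.snd_sub]; push_cast; ring

lemma emb1_zero' (D : ℕ) : emb1 D 0 = 0 := by simp [emb1]
lemma emb2_zero' (D : ℕ) : emb2 D 0 = 0 := by simp [emb2]

noncomputable def coordHom (D : ℕ) (a b : ℝ) : (ℤ × ℤ) →+ ℝ where
  toFun x := a * emb1 D x + b * emb2 D x
  map_zero' := by simp [emb1_zero', emb2_zero']
  map_add' x y := by
    show a * emb1 D (x + y) + b * emb2 D (x + y) = _
    rw [emb1_add', emb2_add']; ring

lemma coordHom_apply (D : ℕ) (a b : ℝ) (x : ℤ × ℤ) :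
    coordHom D a b x = a * emb1 D x + b * emb2 D x := rfl

lemma emb2_eq_zero' (D : ℕ) (hD2 : 2 ≤ D) (hsq : Squarefree D) {y : ℤ × ℤ}
    (h : emb2 D y = 0) : y = 0 := by
  have hirr : Irrational (Real.sqrt D) := by
    rw [irrational_sqrt_natCast_iff]
    rintro ⟨k, hk⟩
    have hk' : k * k ∣ D := ⟨1, by omega⟩
    have h1 := Nat.isUnit_iff.mp (hsq k hk')
    rw [h1] at hk; omega
  have hy2 : y.2 = 0 := by
    by_contra hy2
    have h2 : (y.2 : ℝ) ≠ 0 := Int.cast_ne_zero.mpr hy2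
    unfold emb2 omgc at h
    split_ifs at h with hD4
    · exact hirr ⟨((2 * y.1 + y.2 : ℤ) : ℚ) / ((y.2 : ℤ) : ℚ), by push_cast; field_simp; linarith⟩
    · exact hirr ⟨((y.1 : ℤ) : ℚ) / ((y.2 : ℤ) : ℚ), by push_cast; field_simp; linarith⟩
  have hy1 : y.1 = 0 := by
    unfold emb2 at h
    rw [hy2] at h; push_cast at h
    simp at h
    exact_mod_cast h
  exact Prod.ext hy1 hy2

lemma sum_totpos_nonneg (D : ℕ) (m : Multiset (ℤ × ℤ)) (h : ∀ y ∈ m, TotPos D y) :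
    0 ≤ emb1 D m.sum ∧ 0 ≤ emb2 D m.sum := by
  induction m using Multiset.induction_on with
  | empty => simp [emb1_zero', emb2_zero']
  | cons a s ih =>
    rw [Multiset.sum_cons, emb1_add', emb2_add']
    have ha := h a (Multiset.mem_cons_self a s)
    have ihs := ih (fun y hy => h y (Multiset.mem_cons_of_mem hy))
    constructor <;> linarith [ha.1, ha.2, ihs.1, ihs.2]

set_option maxHeartbeats 1000000 in
theorem stmt10 (D : ℕ)
    (hD2 : 2 ≤ D) (hsq : Squarefree D)
    (β : ℤ → ℤ × ℤ)
    (hβind : ∀ j : ℤ, Indec D (β j))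
    (hβsurj : ∀ x : ℤ × ℤ, Indec D x → ∃ j : ℤ, β j = x)
    (hβmono : StrictMono fun j : ℤ => emb1 D (β j))
    (hβ0 : β 0 = (1, 0))
    (v : ℤ → ℤ) (hv2 : ∀ j : ℤ, 2 ≤ v j)
    (hv : ∀ j : ℤ, β (j - 1) + β (j + 1) = v j • β j)
    (x : ℤ × ℤ) (j e f : ℤ)
    (hx : x = e • β j + f • β (j + 1))
    (he : 1 ≤ e) (he' : e ≤ v j - 1)
    (hf : 0 ≤ f) (hf' : f ≤ v (j + 1) - 1)
    (hef : (e, f) ≠ (v j - 1, v (j + 1) - 1)) :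
    UniqDec D x := by
  -- basic positivity
  have tpos : ∀ i : ℤ, 0 < emb1 D (β i) := fun i => (hβind i).1.1
  have spos : ∀ i : ℤ, 0 < emb2 D (β i) := fun i => (hβind i).1.2
  -- injectivity of β
  have βinj : ∀ a b : ℤ, β a = β b → a = b := fun a b hab =>
    hβmono.injective (congrArg (emb1 D) hab)
  -- recurrences
  have trec : ∀ i : ℤ, emb1 D (β (i-1)) + emb1 D (β (i+1)) = (v i : ℝ) * emb1 D (β i) := by
    intro i
    have h := congrArg (emb1 D) (hv i)
    rwa [emb1_add', emb1_zsmul'] at h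
  have srec : ∀ i : ℤ, emb2 D (β (i-1)) + emb2 D (β (i+1)) = (v i : ℝ) * emb2 D (β i) := by
    intro i
    have h := congrArg (emb2 D) (hv i)
    rwa [emb2_add', emb2_zsmul'] at h
  -- emb2 is strictly decreasing along β
  have santi : StrictAnti (fun i : ℤ => emb2 D (β i)) := by
    apply strictAnti_int_of_succ_lt
    intro i
    by_contra hcon
    push_neg at hcon
    rcases eq_or_lt_of_le hcon with heq | hlt
    · have h0 : emb2 D (β (i+1) - β i) = 0 := by rw [emb2_sub']; linarith
      have h1 : β (i+1) - β i = 0 := emb2_eq_zero' D hD2 hsq h0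
      have h2 : β (i+1) = β i := by rwa [sub_eq_zero] at h1
      have := βinj _ _ h2; omega
    · refine (hβind (i+1)).2 ⟨β i, β (i+1) - β i, (hβind i).1, ⟨?_, ?_⟩, by abel⟩
      · have : emb1 D (β i) < emb1 D (β (i+1)) := hβmono (by omega)
        rw [emb1_sub']; linarith
      · rw [emb2_sub']; linarith
  -- convexity of the embeddings along β
  have tconv : ∀ a b : ℤ, a ≤ b →
      emb1 D (β a) - emb1 D (β (a-1)) ≤ emb1 D (β b) - emb1 D (β (b-1)) := by
    have dmono : Monotone (fun i : ℤ => emb1 D (β i) - emb1 D (β (i-1))) := by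
      apply monotone_int_of_le_succ
      intro i
      rw [show i + 1 - 1 = i from by ring]
      have h2v : (2:ℝ) ≤ (v i : ℝ) := by exact_mod_cast hv2 i
      nlinarith [trec i, tpos i, mul_nonneg (by linarith : (0:ℝ) ≤ (v i : ℝ) - 2) (le_of_lt (tpos i))]
    intro a b hab
    exact dmono hab
  have sconv : ∀ a b : ℤ, a ≤ b →
      emb2 D (β a) - emb2 D (β (a-1)) ≤ emb2 D (β b) - emb2 D (β (b-1)) := by
    have dmono : Monotone (fun i : ℤ => emb2 D (β i) - emb2 D (β (i-1))) := by
      apply monotone_int_of_le_succ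
      intro i
      rw [show i + 1 - 1 = i from by ring]
      have h2v : (2:ℝ) ≤ (v i : ℝ) := by exact_mod_cast hv2 i
      nlinarith [srec i, spos i, mul_nonneg (by linarith : (0:ℝ) ≤ (v i : ℝ) - 2) (le_of_lt (spos i))]
    intro a b hab
    exact dmono hab
  -- value of x under the embeddings
  have hxt : emb1 D x = (e:ℝ) * emb1 D (β j) + (f:ℝ) * emb1 D (β (j+1)) := by
    rw [hx, emb1_add', emb1_zsmul', emb1_zsmul']
  have hxs : emb2 D x = (e:ℝ) * emb2 D (β j) + (f:ℝ) * emb2 D (β (j+1)) := by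
    rw [hx, emb2_add', emb2_zsmul', emb2_zsmul']
  -- strictness from hef
  have hstrict : e < v j - 1 ∨ f < v (j + 1) - 1 := by
    by_contra hcc
    push_neg at hcc
    exact hef (by simp only [Prod.mk.injEq]; omega)
  have hev : (e:ℝ) ≤ (v j : ℝ) - 1 := by exact_mod_cast he'
  have hfv : (f:ℝ) ≤ (v (j+1) : ℝ) - 1 := by exact_mod_cast hf'
  have he0 : (1:ℝ) ≤ (e:ℝ) := by exact_mod_cast he
  have hf0 : (0:ℝ) ≤ (f:ℝ) := by exact_mod_cast hf
  -- base bounds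
  have hb1 : emb1 D x < emb1 D (β (j-1)) + emb1 D (β (j+2)) := by
    have t1 := trec j
    have t2 := trec (j+1)
    rw [show j + 1 - 1 = j from by ring, show j + 1 + 1 = j + 2 from by ring] at t2
    rw [hxt]
    rcases hstrict with h | h
    · have h' : (e:ℝ) < (v j : ℝ) - 1 := by exact_mod_cast h
      have k1 : (e:ℝ) * emb1 D (β j) < ((v j : ℝ) - 1) * emb1 D (β j) := by
        nlinarith [tpos j]
      have k2 : (f:ℝ) * emb1 D (β (j+1)) ≤ ((v (j+1) : ℝ) - 1) * emb1 D (β (j+1)) := by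
        nlinarith [tpos (j+1)]
      nlinarith [t1, t2]
    · have h' : (f:ℝ) < (v (j+1) : ℝ) - 1 := by exact_mod_cast h
      have k1 : (e:ℝ) * emb1 D (β j) ≤ ((v j : ℝ) - 1) * emb1 D (β j) := by
        nlinarith [tpos j]
      have k2 : (f:ℝ) * emb1 D (β (j+1)) < ((v (j+1) : ℝ) - 1) * emb1 D (β (j+1)) := by
        nlinarith [tpos (j+1)]
      nlinarith [t1, t2]
  have hb2 : emb2 D x < emb2 D (β (j-1)) + emb2 D (β (j+2)) := by
    have t1 := srec j
    have t2 := srec (j+1)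
    rw [show j + 1 - 1 = j from by ring, show j + 1 + 1 = j + 2 from by ring] at t2
    rw [hxs]
    rcases hstrict with h | h
    · have h' : (e:ℝ) < (v j : ℝ) - 1 := by exact_mod_cast h
      have k1 : (e:ℝ) * emb2 D (β j) < ((v j : ℝ) - 1) * emb2 D (β j) := by
        nlinarith [spos j]
      have k2 : (f:ℝ) * emb2 D (β (j+1)) ≤ ((v (j+1) : ℝ) - 1) * emb2 D (β (j+1)) := by
        nlinarith [spos (j+1)]
      nlinarith [t1, t2]
    · have h' : (f:ℝ) < (v (j+1) : ℝ) - 1 := by exact_mod_cast h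
      have k1 : (e:ℝ) * emb2 D (β j) ≤ ((v j : ℝ) - 1) * emb2 D (β j) := by
        nlinarith [spos j]
      have k2 : (f:ℝ) * emb2 D (β (j+1)) < ((v (j+1) : ℝ) - 1) * emb2 D (β (j+1)) := by
        nlinarith [spos (j+1)]
      nlinarith [t1, t2]
  -- family of bounds
  have hT : ∀ k : ℤ, 1 ≤ k → emb1 D x < emb1 D (β (j - k)) + emb1 D (β (j + 1 + k)) := by
    intro k hk
    refine Int.le_induction (motive := fun k _ => emb1 D x < emb1 D (β (j - k)) + emb1 D (β (j + 1 + k))) ?_ ?_ k hk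
    · show emb1 D x < emb1 D (β (j - 1)) + emb1 D (β (j + 1 + 1))
      rw [show j + 1 + 1 = j + 2 from by ring]
      exact hb1
    · intro n hn ih
      have ih' : emb1 D x < emb1 D (β (j - n)) + emb1 D (β (j + 1 + n)) := ih
      show emb1 D x < emb1 D (β (j - (n+1))) + emb1 D (β (j + 1 + (n+1)))
      have c := tconv (j - n) (j + 2 + n) (by omega)
      rw [show j - n - 1 = j - (n+1) from by ring, show j + 2 + n - 1 = j + 1 + n from by ring] at c
      rw [show j + 1 + (n+1) = j + 2 + n from by ring]
      linarith
  have hS : ∀ k : ℤ, 1 ≤ k → emb2 D x < emb2 D (β (j - k)) + emb2 D (β (j + 1 + k)) := by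
    intro k hk
    refine Int.le_induction (motive := fun k _ => emb2 D x < emb2 D (β (j - k)) + emb2 D (β (j + 1 + k))) ?_ ?_ k hk
    · show emb2 D x < emb2 D (β (j - 1)) + emb2 D (β (j + 1 + 1))
      rw [show j + 1 + 1 = j + 2 from by ring]
      exact hb2
    · intro n hn ih
      have ih' : emb2 D x < emb2 D (β (j - n)) + emb2 D (β (j + 1 + n)) := ih
      show emb2 D x < emb2 D (β (j - (n+1))) + emb2 D (β (j + 1 + (n+1)))
      have c := sconv (j - n) (j + 2 + n) (by omega)
      rw [show j - n - 1 = j - (n+1) from by ring, show j + 2 + n - 1 = j + 1 + n from by ring] at c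
      rw [show j + 1 + (n+1) = j + 2 + n from by ring]
      linarith
  -- a pair of distinct members of a decomposition is dominated by x
  have hpair : ∀ (m : Multiset (ℤ × ℤ)), (∀ y ∈ m, Indec D y) → m.sum = x →
      ∀ y ∈ m, ∀ z ∈ m.erase y,
        emb1 D y + emb1 D z ≤ emb1 D x ∧ emb2 D y + emb2 D z ≤ emb2 D x := by
    intro m hm hsum y hy z hz
    obtain ⟨m2, hm2⟩ : ∃ m2, m.erase y = z ::ₘ m2 := ⟨_, (Multiset.cons_erase hz).symm⟩
    have hm12 : m = y ::ₘ z ::ₘ m2 := by rw [← hm2, Multiset.cons_erase hy]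
    have hrest : ∀ w ∈ m2, TotPos D w := by
      intro w hw
      refine (hm w ?_).1
      rw [hm12]
      exact Multiset.mem_cons_of_mem (Multiset.mem_cons_of_mem hw)
    have hnn := sum_totpos_nonneg D m2 hrest
    have hkey1 : emb1 D x = emb1 D y + (emb1 D z + emb1 D m2.sum) := by
      rw [← hsum, hm12, Multiset.sum_cons, Multiset.sum_cons, emb1_add', emb1_add']
    have hkey2 : emb2 D x = emb2 D y + (emb2 D z + emb2 D m2.sum) := by
      rw [← hsum, hm12, Multiset.sum_cons, Multiset.sum_cons, emb2_add', emb2_add']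
    constructor <;> [linarith [hnn.1]; linarith [hnn.2]]
  -- the two coordinate functionals w.r.t. the basis (β j, β (j+1))
  have htj : emb1 D (β j) < emb1 D (β (j+1)) := hβmono (by omega)
  have hsj : emb2 D (β (j+1)) < emb2 D (β j) := santi (by omega)
  set Δ : ℝ := emb2 D (β j) * emb1 D (β (j+1)) - emb1 D (β j) * emb2 D (β (j+1)) with hΔdef
  have hΔ : 0 < Δ := by
    rw [hΔdef]
    nlinarith [mul_pos (sub_pos.mpr hsj) (tpos (j+1)), mul_pos (spos (j+1)) (sub_pos.mpr htj)]
  set P : (ℤ × ℤ) →+ ℝ := coordHom D (-(emb2 D (β (j+1))) / Δ) (emb1 D (β (j+1)) / Δ) with hPdef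
  set Q : (ℤ × ℤ) →+ ℝ := coordHom D (emb2 D (β j) / Δ) (-(emb1 D (β j)) / Δ) with hQdef
  have hPj : P (β j) = 1 := by
    rw [hPdef, coordHom_apply]
    field_simp
    rw [hΔdef]; ring
  have hPj1 : P (β (j+1)) = 0 := by
    rw [hPdef, coordHom_apply]; ring
  have hQj : Q (β j) = 0 := by
    rw [hQdef, coordHom_apply]; ring
  have hQj1 : Q (β (j+1)) = 1 := by
    rw [hQdef, coordHom_apply]
    field_simp
    rw [hΔdef]; ring
  have hPrec : ∀ i : ℤ, P (β (i-1)) + P (β (i+1)) = (v i : ℝ) * P (β i) := by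
    intro i
    have h := congrArg (⇑P) (hv i)
    rw [map_add, map_zsmul, zsmul_eq_mul] at h
    exact_mod_cast h
  have hQrec : ∀ i : ℤ, Q (β (i-1)) + Q (β (i+1)) = (v i : ℝ) * Q (β i) := by
    intro i
    have h := congrArg (⇑Q) (hv i)
    rw [map_add, map_zsmul, zsmul_eq_mul] at h
    exact_mod_cast h
  -- downward induction for P
  have hPdown : ∀ i : ℤ, i ≤ j →
      ((v j : ℝ) ≤ P (β (i-1)) ∧ P (β i) < P (β (i-1)) ∧ 0 ≤ P (β i)) := by
    intro i hi
    refine Int.le_induction_down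
      (motive := fun i _ => (v j : ℝ) ≤ P (β (i-1)) ∧ P (β i) < P (β (i-1)) ∧ 0 ≤ P (β i)) ?_ ?_ i hi
    · show (v j : ℝ) ≤ P (β (j-1)) ∧ P (β j) < P (β (j-1)) ∧ 0 ≤ P (β j)
      have h := hPrec j
      rw [hPj, hPj1] at h
      have hvj : (2:ℝ) ≤ (v j : ℝ) := by exact_mod_cast hv2 j
      refine ⟨by linarith, ?_, ?_⟩
      · rw [hPj]; linarith
      · rw [hPj]; linarith
    · intro n hn ih
      obtain ⟨ih1, ih2, ih3⟩ := ih
      show (v j : ℝ) ≤ P (β (n-1-1)) ∧ P (β (n-1)) < P (β (n-1-1)) ∧ 0 ≤ P (β (n-1))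
      rw [show n - 1 - 1 = n - 2 from by ring]
      have h := hPrec (n-1)
      rw [show n - 1 - 1 = n - 2 from by ring, show n - 1 + 1 = n from by ring] at h
      have hvn : (2:ℝ) ≤ (v (n-1) : ℝ) := by exact_mod_cast hv2 (n-1)
      have hvj : (2:ℝ) ≤ (v j : ℝ) := by exact_mod_cast hv2 j
      have hkey : P (β (n-1)) + (P (β (n-1)) - P (β n)) ≤ P (β (n-2)) := by
        nlinarith [h, mul_nonneg (by linarith : (0:ℝ) ≤ (v (n-1) : ℝ) - 2)
          (by linarith : (0:ℝ) ≤ P (β (n-1)))]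
      exact ⟨by linarith, by linarith, by linarith⟩
  have hPa : ∀ a : ℤ, a ≤ j - 1 → (v j : ℝ) ≤ P (β a) := by
    intro a ha
    have h := (hPdown (a+1) (by omega)).1
    rwa [show a + 1 - 1 = a from by ring] at h
  have hPnn : ∀ i : ℤ, i ≤ j + 1 → 0 ≤ P (β i) := by
    intro i hi
    rcases eq_or_lt_of_le hi with h | h
    · exact le_of_eq (by rw [h, hPj1])
    · exact (hPdown i (by omega)).2.2
  -- upward induction for Q
  have hQup : ∀ i : ℤ, j + 1 ≤ i →
      ((v (j+1) : ℝ) ≤ Q (β (i+1)) ∧ Q (β i) < Q (β (i+1)) ∧ 0 ≤ Q (β i)) := by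
    intro i hi
    refine Int.le_induction
      (motive := fun i _ => (v (j+1) : ℝ) ≤ Q (β (i+1)) ∧ Q (β i) < Q (β (i+1)) ∧ 0 ≤ Q (β i)) ?_ ?_ i hi
    · show (v (j+1) : ℝ) ≤ Q (β (j+1+1)) ∧ Q (β (j+1)) < Q (β (j+1+1)) ∧ 0 ≤ Q (β (j+1))
      have h := hQrec (j+1)
      rw [show j + 1 - 1 = j from by ring, hQj, hQj1] at h
      have hvj : (2:ℝ) ≤ (v (j+1) : ℝ) := by exact_mod_cast hv2 (j+1)
      refine ⟨by linarith, ?_, ?_⟩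
      · rw [hQj1]; linarith
      · rw [hQj1]; linarith
    · intro n hn ih
      obtain ⟨ih1, ih2, ih3⟩ := ih
      show (v (j+1) : ℝ) ≤ Q (β (n+1+1)) ∧ Q (β (n+1)) < Q (β (n+1+1)) ∧ 0 ≤ Q (β (n+1))
      rw [show n + 1 + 1 = n + 2 from by ring]
      have h := hQrec (n+1)
      rw [show n + 1 - 1 = n from by ring, show n + 1 + 1 = n + 2 from by ring] at h
      have hvn : (2:ℝ) ≤ (v (n+1) : ℝ) := by exact_mod_cast hv2 (n+1)
      have hvj : (2:ℝ) ≤ (v (j+1) : ℝ) := by exact_mod_cast hv2 (j+1)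
      have hkey : Q (β (n+1)) + (Q (β (n+1)) - Q (β n)) ≤ Q (β (n+2)) := by
        nlinarith [h, mul_nonneg (by linarith : (0:ℝ) ≤ (v (n+1) : ℝ) - 2)
          (by linarith : (0:ℝ) ≤ Q (β (n+1)))]
      exact ⟨by linarith, by linarith, by linarith⟩
  have hQb : ∀ b : ℤ, j + 2 ≤ b → (v (j+1) : ℝ) ≤ Q (β b) := by
    intro b hb
    have h := (hQup (b-1) (by omega)).1
    rwa [show b - 1 + 1 = b from by ring] at h
  have hQnn : ∀ i : ℤ, j ≤ i → 0 ≤ Q (β i) := by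
    intro i hi
    rcases eq_or_lt_of_le hi with h | h
    · exact le_of_eq (by rw [← h, hQj])
    · exact (hQup i (by omega)).2.2
  -- values of x under P and Q
  have hPx : P x = (e : ℝ) := by
    rw [hx, map_add, map_zsmul, map_zsmul, hPj, hPj1]
    simp
  have hQx : Q x = (f : ℝ) := by
    rw [hx, map_add, map_zsmul, map_zsmul, hQj, hQj1]
    simp
  -- main uniqueness argument
  have hmain : ∀ m : Multiset (ℤ × ℤ), (∀ y ∈ m, Indec D y) → m.sum = x →
      m = Multiset.replicate e.toNat (β j) + Multiset.replicate f.toNat (β (j+1)) := by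
    intro m hm hsum
    -- no decomposition contains indecomposables on both sides of {β j, β (j+1)}
    have hboth : ∀ a : ℤ, a ≤ j - 1 → β a ∈ m → ∀ b : ℤ, j + 2 ≤ b → β b ∉ m := by
      intro a ha hma b hb hmb
      have hne : β a ≠ β b := fun hEq => by have := βinj _ _ hEq; omega
      have hzb : β b ∈ m.erase (β a) := (Multiset.mem_erase_of_ne (Ne.symm hne)).mpr hmb
      have hp := hpair m hm hsum (β a) hma (β b) hzb
      rcases le_or_gt (j - a) (b - (j+1)) with hle | hlt
      · have hTk := hT (b - (j + 1)) (by omega)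
        rw [show j + 1 + (b - (j + 1)) = b from by ring] at hTk
        have h1 : emb1 D (β (j - (b - (j+1)))) ≤ emb1 D (β a) := hβmono.monotone (by omega)
        linarith [hp.1]
      · have hSk := hS (j - a) (by omega)
        rw [show j - (j - a) = a from by ring] at hSk
        have h1 : emb2 D (β (j + 1 + (j - a))) ≤ emb2 D (β b) := santi.antitone (by omega)
        linarith [hp.2]
    -- no summand with index ≤ j - 1
    have hA : ∀ a : ℤ, a ≤ j - 1 → β a ∉ m := by
      intro a ha hma
      have hall : ∀ z ∈ m, 0 ≤ P z := by
        intro z hz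
        obtain ⟨i, hi⟩ := hβsurj z (hm z hz)
        rcases le_or_gt i (j+1) with h | h
        · rw [← hi]; exact hPnn i h
        · exact absurd (by rwa [hi] : β i ∈ m) (hboth a ha hma i (by omega))
      obtain ⟨m2, hm2⟩ : ∃ m2, m = β a ::ₘ m2 := ⟨_, (Multiset.cons_erase hma).symm⟩
      have hg : (e : ℝ) = P (β a) + P m2.sum := by
        rw [← hPx, ← hsum, hm2, Multiset.sum_cons, map_add]
      have hnn2 : 0 ≤ P m2.sum := by
        rw [map_multiset_sum]
        apply Multiset.sum_nonneg
        intro r hr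
        obtain ⟨z, hz, rfl⟩ := Multiset.mem_map.mp hr
        exact hall z (by rw [hm2]; exact Multiset.mem_cons_of_mem hz)
      linarith [hPa a ha]
    -- no summand with index ≥ j + 2
    have hB : ∀ b : ℤ, j + 2 ≤ b → β b ∉ m := by
      intro b hb hmb
      have hall : ∀ z ∈ m, 0 ≤ Q z := by
        intro z hz
        obtain ⟨i, hi⟩ := hβsurj z (hm z hz)
        rcases le_or_gt i (j-1) with h | h
        · exact absurd (by rwa [hi] : β i ∈ m) (hA i h)
        · rw [← hi]; exact hQnn i (by omega)
      obtain ⟨m2, hm2⟩ : ∃ m2, m = β b ::ₘ m2 := ⟨_, (Multiset.cons_erase hmb).symm⟩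
      have hg : (f : ℝ) = Q (β b) + Q m2.sum := by
        rw [← hQx, ← hsum, hm2, Multiset.sum_cons, map_add]
      have hnn2 : 0 ≤ Q m2.sum := by
        rw [map_multiset_sum]
        apply Multiset.sum_nonneg
        intro r hr
        obtain ⟨z, hz, rfl⟩ := Multiset.mem_map.mp hr
        exact hall z (by rw [hm2]; exact Multiset.mem_cons_of_mem hz)
      linarith [hQb b hb]
    -- hence every summand is β j or β (j+1)
    have hsupp : ∀ y ∈ m, y = β j ∨ y = β (j+1) := by
      intro y hy
      obtain ⟨i, hi⟩ := hβsurj y (hm y hy)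
      have h1 : ¬ (i ≤ j - 1) := fun h => hA i h (by rwa [hi])
      have h2 : ¬ (j + 2 ≤ i) := fun h => hB i h (by rwa [hi])
      have h3 : i = j ∨ i = j + 1 := by omega
      rcases h3 with h | h
      · left; rw [← hi, h]
      · right; rw [← hi, h]
    have hne : β j ≠ β (j+1) := fun hEq => by have := βinj _ _ hEq; omega
    have hmrep : m = Multiset.replicate (m.count (β j)) (β j)
        + Multiset.replicate (m.count (β (j+1))) (β (j+1)) := by
      refine Multiset.ext.mpr fun y => ?_
      rw [Multiset.count_add, Multiset.count_replicate, Multiset.count_replicate]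
      by_cases h1 : β j = y
      · rw [if_pos h1, if_neg (by rw [← h1]; exact Ne.symm hne), ← h1, add_zero]
      · by_cases h2 : β (j+1) = y
        · rw [if_neg h1, if_pos h2, ← h2, zero_add]
        · rw [if_neg h1, if_neg h2, Multiset.count_eq_zero]
          intro hy
          rcases hsupp y hy with h | h
          · exact h1 h.symm
          · exact h2 h.symm
    have hmsum : m.sum = (m.count (β j)) • β j + (m.count (β (j+1))) • β (j+1) := by
      conv_lhs => rw [hmrep]
      rw [Multiset.sum_add, Multiset.sum_replicate, Multiset.sum_replicate]
    have hc1 : ((m.count (β j) : ℤ) : ℝ) = (e : ℝ) := by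
      have h := hPx
      rw [← hsum, hmsum, map_add, map_nsmul, map_nsmul, hPj, hPj1] at h
      push_cast
      simpa using h
    have hc2 : ((m.count (β (j+1)) : ℤ) : ℝ) = (f : ℝ) := by
      have h := hQx
      rw [← hsum, hmsum, map_add, map_nsmul, map_nsmul, hQj, hQj1] at h
      push_cast
      simpa using h
    have hc1' : (m.count (β j) : ℤ) = e := by exact_mod_cast hc1
    have hc2' : (m.count (β (j+1)) : ℤ) = f := by exact_mod_cast hc2
    rw [hmrep, show m.count (β j) = e.toNat from by omega,
      show m.count (β (j+1)) = f.toNat from by omega]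
  -- conclusion
  refine ⟨Multiset.replicate e.toNat (β j) + Multiset.replicate f.toNat (β (j+1)),
    ⟨?_, ?_⟩, fun m hm => hmain m hm.1 hm.2⟩
  · intro y hy
    rw [Multiset.mem_add] at hy
    rcases hy with hy | hy
    · rw [Multiset.eq_of_mem_replicate hy]; exact hβind j
    · rw [Multiset.eq_of_mem_replicate hy]; exact hβind (j+1)
  · have h1 : e.toNat • β j = e • β j := by
      rw [← natCast_zsmul, Int.toNat_of_nonneg (by omega : (0:ℤ) ≤ e)]
    have h2 : f.toNat • β (j+1) = f • β (j+1) := by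
      rw [← natCast_zsmul, Int.toNat_of_nonneg (by omega : (0:ℤ) ≤ f)]
    rw [Multiset.sum_add, Multiset.sum_replicate, Multiset.sum_replicate, h1, h2, hx]
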